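/- arXiv:0910.3872 — 3 statements merged into one kernel-verified Lean document; each statement's English description precedes it below -/
import Mathlib

section
/- Let n ≥ 1, let R : ℝ → Matrix (Fin n) (Fin n) ℝ be continuous with R(t) symmetric for every t, and let r, s > 0. Let S be a Lagrangian Jacobi solution along R with S(0) = 1 and S(s) = 0 such that S(u) is invertible for every u ∈ [−r, s), and let U be a Jacobi solution along R with U(0) = 1 and U(−r) = 0. Then for every t ∈ (−r, s), U(t) = S(t) * (∫_{−r}^{t} (S(u)ᵀ * S(u))⁻¹ du) * (U'(0) − S'(0)). -/
open Matrix MeasureTheory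

attribute [local instance] Matrix.normedAddCommGroup Matrix.normedSpace

section Aux

variable {n : ℕ}

theorem hasDerivAt_matrix {A : ℝ → Matrix (Fin n) (Fin n) ℝ} {A' : Matrix (Fin n) (Fin n) ℝ}
    {t : ℝ} :
    HasDerivAt A A' t ↔ ∀ i j, HasDerivAt (fun t => A t i j) (A' i j) t := by
  simp only [hasDerivAt_iff_hasFDerivAt]
  rw [show (ContinuousLinearMap.toSpanSingleton ℝ A') =
      ContinuousLinearMap.pi (fun i => ContinuousLinearMap.pi fun j =>
        ContinuousLinearMap.toSpanSingleton ℝ (A' i j)) from by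
    refine ContinuousLinearMap.ext fun x => funext fun i => funext fun j => ?_
    exact (smul_eq_mul x (A' i j)).symm]
  refine hasFDerivAt_pi.trans ?_
  exact forall_congr' fun i => hasFDerivAt_pi

theorem HasDerivAt.matrix_mul {A B : ℝ → Matrix (Fin n) (Fin n) ℝ}
    {A' B' : Matrix (Fin n) (Fin n) ℝ} {t : ℝ}
    (hA : HasDerivAt A A' t) (hB : HasDerivAt B B' t) :
    HasDerivAt (fun t => A t * B t) (A' * B t + A t * B') t := by
  rw [hasDerivAt_matrix] at hA hB ⊢
  intro i j
  have h := HasDerivAt.fun_sum (u := Finset.univ)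
    (A := fun k t => A t i k * B t k j)
    (A' := fun k => A' i k * B t k j + A t i k * B' k j)
    (fun k _ => (hA i k).mul (hB k j))
  simpa [Matrix.mul_apply, Matrix.add_apply, Finset.sum_add_distrib] using h

theorem HasDerivAt.matrix_transpose {A : ℝ → Matrix (Fin n) (Fin n) ℝ}
    {A' : Matrix (Fin n) (Fin n) ℝ} {t : ℝ} (hA : HasDerivAt A A' t) :
    HasDerivAt (fun t => (A t)ᵀ) A'ᵀ t := by
  rw [hasDerivAt_matrix] at hA ⊢
  intro i j
  simpa [Matrix.transpose_apply] using hA j i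

theorem differentiableAt_matrix_det {A : ℝ → Matrix (Fin n) (Fin n) ℝ} {t : ℝ}
    (h : ∀ i j, DifferentiableAt ℝ (fun t => A t i j) t) :
    DifferentiableAt ℝ (fun t => (A t).det) t := by
  simp only [Matrix.det_apply']
  refine DifferentiableAt.fun_sum fun σ _ => DifferentiableAt.const_mul ?_ _
  exact (HasDerivAt.fun_finsetProd fun i _ => (h (σ i) i).hasDerivAt).differentiableAt

theorem differentiableAt_matrix_adjugate {A : ℝ → Matrix (Fin n) (Fin n) ℝ} {t : ℝ}
    (h : ∀ i j, DifferentiableAt ℝ (fun t => A t i j) t) (i j : Fin n) :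
    DifferentiableAt ℝ (fun t => (A t).adjugate i j) t := by
  simp only [Matrix.adjugate_apply]
  refine differentiableAt_matrix_det fun a b => ?_
  simp only [Matrix.updateRow_apply]
  by_cases hab : a = j <;> simp [hab, h a b]

theorem differentiableAt_matrix_inv {A : ℝ → Matrix (Fin n) (Fin n) ℝ} {t : ℝ}
    (hA : DifferentiableAt ℝ A t) (hdet : (A t).det ≠ 0) :
    DifferentiableAt ℝ (fun t => (A t)⁻¹) t := by
  have hent : ∀ i j, DifferentiableAt ℝ (fun t => A t i j) t := fun i j =>
    (hasDerivAt_matrix.mp hA.hasDerivAt i j).differentiableAt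
  have hdetd : DifferentiableAt ℝ (fun t => (A t).det) t := differentiableAt_matrix_det hent
  have hrw : (fun t => (A t)⁻¹) = fun t => ((A t).det)⁻¹ • (A t).adjugate := by
    funext u; rw [Matrix.inv_def, Ring.inverse_eq_inv]
  rw [hrw]
  refine (hdetd.inv hdet).smul ?_
  exact differentiableAt_pi.mpr fun i => differentiableAt_pi.mpr fun j =>
    differentiableAt_matrix_adjugate hent i j

/-- The derivative relation for the matrix inverse at a point of invertibility. -/
theorem hasDerivAt_matrix_inv {A : ℝ → Matrix (Fin n) (Fin n) ℝ} {A' : Matrix (Fin n) (Fin n) ℝ}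
    {t : ℝ} (hA : HasDerivAt A A' t) (hAc : Continuous A) (hdet : (A t).det ≠ 0) :
    HasDerivAt (fun u => (A u)⁻¹) (-((A t)⁻¹ * A' * (A t)⁻¹)) t := by
  have hdiff : DifferentiableAt ℝ (fun u => (A u)⁻¹) t :=
    differentiableAt_matrix_inv hA.differentiableAt hdet
  set P' := deriv (fun u => (A u)⁻¹) t with hP'
  have hP : HasDerivAt (fun u => (A u)⁻¹) P' t := hdiff.hasDerivAt
  have hmul : HasDerivAt (fun u => (A u)⁻¹ * A u) (P' * A t + (A t)⁻¹ * A') t :=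
    hP.matrix_mul hA
  have hdc : ContinuousAt (fun u => (A u).det) t := by
    have : Continuous fun u => (A u).det := hAc.matrix_det
    exact this.continuousAt
  have hev : (fun u => (A u)⁻¹ * A u) =ᶠ[nhds t] fun _ => (1 : Matrix (Fin n) (Fin n) ℝ) := by
    filter_upwards [hdc.eventually_ne hdet] with u hu
    exact Matrix.nonsing_inv_mul _ (isUnit_iff_ne_zero.mpr hu)
  have hone : HasDerivAt (fun u => (A u)⁻¹ * A u) 0 t :=
    (hasDerivAt_const t (1 : Matrix (Fin n) (Fin n) ℝ)).congr_of_eventuallyEq hev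
  have hrel : P' * A t + (A t)⁻¹ * A' = 0 := hmul.unique hone
  have hPA : P' * A t = -((A t)⁻¹ * A') := by
    rw [eq_neg_iff_add_eq_zero]; exact hrel
  have hunit : IsUnit (A t).det := isUnit_iff_ne_zero.mpr hdet
  have : P' = -((A t)⁻¹ * A' * (A t)⁻¹) := by
    calc P' = P' * (A t * (A t)⁻¹) := by rw [Matrix.mul_nonsing_inv _ hunit, mul_one]
    _ = P' * A t * (A t)⁻¹ := by rw [mul_assoc]
    _ = -((A t)⁻¹ * A') * (A t)⁻¹ := by rw [hPA]
    _ = -((A t)⁻¹ * A' * (A t)⁻¹) := by rw [neg_mul]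
  rw [← this]; exact hP

end Aux

/-- A Jacobi solution along `R`: a twice continuously differentiable matrix-valued
map `Y` satisfying `Y'' + R Y = 0`. -/
def IsJacobi {n : ℕ} (R Y : ℝ → Matrix (Fin n) (Fin n) ℝ) : Prop :=
  ContDiff ℝ 2 Y ∧ ∀ t : ℝ, deriv (deriv Y) t + R t * Y t = 0

/-- A Lagrangian (self-conjugate) solution: the Wronskian `W(Y,Y)` vanishes. -/
def IsLagrangian {n : ℕ} (Y : ℝ → Matrix (Fin n) (Fin n) ℝ) : Prop :=
  ∀ t : ℝ, (deriv Y t)ᵀ * Y t = (Y t)ᵀ * deriv Y t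

section Main

variable {n : ℕ}

theorem IsJacobi.differentiable {R Y : ℝ → Matrix (Fin n) (Fin n) ℝ} (h : IsJacobi R Y) :
    Differentiable ℝ Y := h.1.differentiable (by norm_num)

theorem IsJacobi.differentiable_deriv {R Y : ℝ → Matrix (Fin n) (Fin n) ℝ} (h : IsJacobi R Y) :
    Differentiable ℝ (deriv Y) := by
  have h2 : ContDiff ℝ ((1 : WithTop ℕ∞) + 1) Y := by
    have : ((1 : WithTop ℕ∞) + 1) = 2 := by norm_num
    rw [this]; exact h.1
  exact ((contDiff_succ_iff_deriv.mp h2).2.2).differentiable one_ne_zero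

theorem IsJacobi.deriv2 {R Y : ℝ → Matrix (Fin n) (Fin n) ℝ} (h : IsJacobi R Y) (t : ℝ) :
    deriv (deriv Y) t = -(R t * Y t) := by
  have := h.2 t
  exact eq_neg_of_add_eq_zero_left this

end Main

/-- `U(t) = S(t) (∫_{−r}^t (SᵀS)⁻¹(u) du) (U'(0) − S'(0))` on `(−r, s)`, where
`S(0) = 1`, `S(s) = 0`, `S` nonsingular on `[−r, s)`, and `U(0) = 1`, `U(−r) = 0`. -/
theorem U_eq_S_mul_integral_mul_wronskian {n : ℕ} (hn : 1 ≤ n)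
    (R : ℝ → Matrix (Fin n) (Fin n) ℝ) (hRc : Continuous R)
    (hRsym : ∀ t : ℝ, (R t)ᵀ = R t)
    (r s : ℝ) (hr : 0 < r) (hs : 0 < s)
    (S : ℝ → Matrix (Fin n) (Fin n) ℝ)
    (hS : IsJacobi R S) (hSL : IsLagrangian S) (hS0 : S 0 = 1) (hSs : S s = 0)
    (hSinv : ∀ u ∈ Set.Ico (-r) s, IsUnit (S u))
    (U : ℝ → Matrix (Fin n) (Fin n) ℝ)
    (hU : IsJacobi R U) (hU0 : U 0 = 1) (hUr : U (-r) = 0) :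
    ∀ t ∈ Set.Ioo (-r) s,
      U t = S t * (∫ u in (-r)..t, ((S u)ᵀ * S u)⁻¹) * (deriv U 0 - deriv S 0) := by
  have hSd := hS.differentiable
  have hUd := hU.differentiable
  have hS'd := hS.differentiable_deriv
  have hU'd := hU.differentiable_deriv
  have hScont : Continuous S := hSd.continuous
  set C : Matrix (Fin n) (Fin n) ℝ := deriv U 0 - deriv S 0 with hC
  -- The Wronskian is constant, equal to `C`.
  have hW : ∀ x : ℝ, (S x)ᵀ * deriv U x - (deriv S x)ᵀ * U x = C := by
    have hWd : ∀ x, HasDerivAt (fun u => (S u)ᵀ * deriv U u - (deriv S u)ᵀ * U u) 0 x := by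
      intro x
      have hU'' : HasDerivAt (deriv U) (-(R x * U x)) x := by
        have h := (hU'd x).hasDerivAt; rw [← hU.deriv2 x]; exact h
      have hS'' : HasDerivAt (deriv S) (-(R x * S x)) x := by
        have h := (hS'd x).hasDerivAt; rw [← hS.deriv2 x]; exact h
      have h1 : HasDerivAt (fun u => (S u)ᵀ * deriv U u)
          ((deriv S x)ᵀ * deriv U x + (S x)ᵀ * -(R x * U x)) x :=
        ((hSd x).hasDerivAt.matrix_transpose).matrix_mul hU''
      have h2 : HasDerivAt (fun u => (deriv S u)ᵀ * U u)
          ((-(R x * S x))ᵀ * U x + (deriv S x)ᵀ * deriv U x) x :=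
        (hS''.matrix_transpose).matrix_mul (hUd x).hasDerivAt
      have h3 := h1.sub h2
      convert h3 using 1
      · rfl
      · rfl
      · rfl
      · rfl
      rw [Matrix.transpose_neg, Matrix.transpose_mul, hRsym]
      noncomm_ring
    intro x
    have hconst := is_const_of_deriv_eq_zero (fun y => (hWd y).differentiableAt)
      (fun y => (hWd y).deriv) x 0
    have hS'0 : (deriv S 0)ᵀ = deriv S 0 := by
      have h := hSL 0; rwa [hS0, Matrix.transpose_one, mul_one, one_mul] at h
    rw [hconst, hS0, hU0, Matrix.transpose_one, one_mul, mul_one, hS'0]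
  -- Nonvanishing determinants.
  have hdet : ∀ u ∈ Set.Ico (-r) s, (S u).det ≠ 0 := fun u hu =>
    isUnit_iff_ne_zero.mp ((Matrix.isUnit_iff_isUnit_det _).mp (hSinv u hu))
  set g : ℝ → Matrix (Fin n) (Fin n) ℝ := fun u => ((S u)ᵀ * S u)⁻¹ with hg
  have hdet2 : ∀ u : ℝ, (S u).det ≠ 0 → ((S u)ᵀ * S u).det ≠ 0 := fun u hu => by
    rw [Matrix.det_mul, Matrix.det_transpose]; exact mul_ne_zero hu hu
  have hgdiff : ∀ u : ℝ, (S u).det ≠ 0 → DifferentiableAt ℝ g u := fun u hu =>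
    differentiableAt_matrix_inv
      (((hSd u).hasDerivAt.matrix_transpose).matrix_mul (hSd u).hasDerivAt).differentiableAt
      (hdet2 u hu)
  have hgcont : ∀ u : ℝ, (S u).det ≠ 0 → ContinuousAt g u := fun u hu =>
    (hgdiff u hu).continuousAt
  have hVopen : IsOpen {u : ℝ | (S u).det ≠ 0} := by
    have hc : Continuous fun u => (S u).det := hScont.matrix_det
    exact isOpen_compl_iff.mpr (isClosed_singleton.preimage hc)
  set F : ℝ → Matrix (Fin n) (Fin n) ℝ := fun x => ∫ u in (-r)..x, g u with hF
  -- FTC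
  have hFd : ∀ x ∈ Set.Ico (-r) s, HasDerivAt F (g x) x := by
    intro x hx
    have hint : @IntervalIntegrable _ _ NormedAddGroup.toENormedAddMonoid g volume (-r) x := by
      have hsub : Set.uIcc (-r) x ⊆ Set.Ico (-r) s := by
        rw [Set.uIcc_of_le hx.1]
        exact fun y hy => ⟨hy.1, lt_of_le_of_lt hy.2 hx.2⟩
      exact (ContinuousOn.intervalIntegrable fun y hy =>
        (hgcont y (hdet y (hsub hy))).continuousWithinAt)
    refine intervalIntegral.integral_hasDerivAt_right hint ?_ (hgcont x (hdet x hx))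
    exact ContinuousAt.stronglyMeasurableAtFilter hVopen (fun u hu => hgcont u hu) x (hdet x hx)
  set P : ℝ → Matrix (Fin n) (Fin n) ℝ := fun u => (S u)⁻¹ with hPdef
  set G : ℝ → Matrix (Fin n) (Fin n) ℝ := fun u => P u * U u - F u * C with hG
  have hGd : ∀ x ∈ Set.Ico (-r) s, HasDerivAt G 0 x := by
    intro x hx
    have hdx := hdet x hx
    have hunit : IsUnit (S x).det := isUnit_iff_ne_zero.mpr hdx
    have hPx : HasDerivAt P (-((S x)⁻¹ * deriv S x * (S x)⁻¹)) x :=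
      hasDerivAt_matrix_inv (hSd x).hasDerivAt hScont hdx
    have h1 : HasDerivAt (fun u => P u * U u)
        (-((S x)⁻¹ * deriv S x * (S x)⁻¹) * U x + P x * deriv U x) x :=
      hPx.matrix_mul (hUd x).hasDerivAt
    have h2 : HasDerivAt (fun u => F u * C) (g x * C + F x * 0) x :=
      (hFd x hx).matrix_mul (hasDerivAt_const x C)
    have h3 := h1.sub h2
    convert h3 using 1
    · rfl
    · rfl
    · rfl
    · rfl
    -- now the algebra
    set A := S x
    set A' := deriv S x
    set B := U x
    set B' := deriv U x
    have f1 : A * A⁻¹ = 1 := Matrix.mul_nonsing_inv _ hunit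
    have f2 : A⁻¹ * A = 1 := Matrix.nonsing_inv_mul _ hunit
    have f3 : g x = A⁻¹ * (A⁻¹)ᵀ := by
      show (Aᵀ * A)⁻¹ = A⁻¹ * (A⁻¹)ᵀ
      rw [Matrix.mul_inv_rev, Matrix.transpose_nonsing_inv]
    have f4 : Aᵀ * B' - A'ᵀ * B = C := hW x
    have f5 : A'ᵀ * A = Aᵀ * A' := hSL x
    have key : (A⁻¹)ᵀ * A'ᵀ = A' * A⁻¹ := by
      have hA't : A'ᵀ = Aᵀ * A' * A⁻¹ := by
        calc A'ᵀ = A'ᵀ * (A * A⁻¹) := by rw [f1, mul_one]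
        _ = A'ᵀ * A * A⁻¹ := by rw [mul_assoc]
        _ = Aᵀ * A' * A⁻¹ := by rw [f5]
      have hAt : (A⁻¹)ᵀ * Aᵀ = 1 := by
        rw [← Matrix.transpose_mul, f1, Matrix.transpose_one]
      calc (A⁻¹)ᵀ * A'ᵀ = (A⁻¹)ᵀ * (Aᵀ * A' * A⁻¹) := by rw [← hA't]
      _ = (A⁻¹)ᵀ * Aᵀ * A' * A⁻¹ := by rw [← mul_assoc, ← mul_assoc]
      _ = A' * A⁻¹ := by rw [hAt, one_mul]
    have hAit : (A⁻¹)ᵀ * Aᵀ = 1 := by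
      rw [← Matrix.transpose_mul, f1, Matrix.transpose_one]
    have main : g x * C = -(A⁻¹ * A' * A⁻¹) * B + A⁻¹ * B' := by
      calc g x * C = A⁻¹ * (A⁻¹)ᵀ * (Aᵀ * B' - A'ᵀ * B) := by rw [f3, f4]
      _ = A⁻¹ * ((A⁻¹)ᵀ * Aᵀ) * B' - A⁻¹ * ((A⁻¹)ᵀ * A'ᵀ) * B := by
          rw [mul_sub]; simp only [mul_assoc]
      _ = A⁻¹ * B' - A⁻¹ * (A' * A⁻¹) * B := by rw [hAit, key, mul_one]
      _ = -(A⁻¹ * A' * A⁻¹) * B + A⁻¹ * B' := by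
          rw [neg_mul, ← mul_assoc]
          abel
    rw [mul_zero, add_zero, main]
    abel
  -- `G` is constant on `[-r, t]`, and vanishes at `-r`.
  intro t ht
  have hmem : Set.Icc (-r) t ⊆ Set.Ico (-r) s := fun y hy => ⟨hy.1, lt_of_le_of_lt hy.2 ht.2⟩
  have hGcont : ContinuousOn G (Set.Icc (-r) t) := fun y hy =>
    ((hGd y (hmem hy)).continuousAt).continuousWithinAt
  have hGconst : G t = G (-r) := by
    refine constant_of_has_deriv_right_zero hGcont (fun y hy => ?_) t ?_
    · exact (hGd y (hmem ⟨hy.1, hy.2.le⟩)).hasDerivWithinAt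
    · exact ⟨ht.1.le, le_refl t⟩
  have hGr : G (-r) = 0 := by
    have hFr : F (-r) = 0 := intervalIntegral.integral_same
    show P (-r) * U (-r) - F (-r) * C = 0
    rw [hUr, hFr, mul_zero, zero_mul, sub_zero]
  have hPU : P t * U t = F t * C := by
    have h0 : P t * U t - F t * C = 0 := hGconst.trans hGr
    rwa [sub_eq_zero] at h0
  have hunit_t : IsUnit (S t).det := isUnit_iff_ne_zero.mpr (hdet t ⟨ht.1.le, ht.2⟩)
  calc U t = 1 * U t := (one_mul _).symm
  _ = (S t * P t) * U t := by rw [Matrix.mul_nonsing_inv _ hunit_t]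
  _ = S t * (P t * U t) := by rw [mul_assoc]
  _ = S t * (F t * C) := by rw [hPU]
  _ = S t * F t * C := by rw [mul_assoc]
end

section
/- Let n ≥ 1, let R : ℝ → Matrix (Fin n) (Fin n) ℝ be continuous with R(t) symmetric for every t, let α ≥ 1 and t > 0. Let U be a Lagrangian Jacobi solution along R with U(0) = 1 such that U(u) is invertible and ‖U(u) x‖ ≥ ‖x‖ / α for all u ∈ [0, t] and all x ∈ ℝⁿ, and let S_t be the Jacobi solution along R with S_t(0) = 1 and S_t(t) = 0. Then for every x ∈ ℝⁿ, ⟨(U'(0) − S_t'(0)) x, x⟩ ≥ ⟨x, x⟩ / (α² t). -/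
open Matrix MeasureTheory

attribute [local instance] Matrix.normedAddCommGroup Matrix.normedSpace

/-- The Euclidean norm on `ℝⁿ`. -/
noncomputable def euclNorm {n : ℕ} (x : Fin n → ℝ) : ℝ :=
  Real.sqrt (x ⬝ᵥ x)

namespace JacobiAux

open Filter

variable {n : ℕ}
local notation "M" => Matrix (Fin n) (Fin n) ℝ

noncomputable def mulCLM : M →L[ℝ] M →L[ℝ] M :=
  LinearMap.toContinuousLinearMap <|
    ((LinearMap.toContinuousLinearMap : (M →ₗ[ℝ] M) ≃ₗ[ℝ] (M →L[ℝ] M)).toLinearMap.comp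
      (LinearMap.mul ℝ M))

@[simp] lemma mulCLM_apply (A B : M) : (mulCLM A) B = A * B := by
  simp [mulCLM]

lemma hdaN (f : ℝ → M) (f' : M) (u : ℝ) :
    @HasDerivAt ℝ _ M NormedAddCommGroup.toAddCommGroup NormedSpace.toModule
      PseudoMetricSpace.toUniformSpace.toTopologicalSpace _ f f' u ↔ HasDerivAt f f' u := Iff.rfl

lemma _root_.HasDerivAt.matmul {f g : ℝ → M} {f' g' : M} {u : ℝ}
    (hf : HasDerivAt f f' u) (hg : HasDerivAt g g' u) :
    HasDerivAt (fun v => f v * g v) (f' * g u + f u * g') u := by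
  letI : NormedAddCommGroup (M →L[ℝ] M) := ContinuousLinearMap.toNormedAddCommGroup
  letI : NormedSpace ℝ (M →L[ℝ] M) := ContinuousLinearMap.toNormedSpace
  have h1 : HasDerivAt (fun v => mulCLM (f v)) (mulCLM f') u :=
    (mulCLM.hasFDerivAt.comp_hasDerivAt u ((hdaN _ _ _).mpr hf))
  have := h1.clm_apply hg
  exact this

noncomputable def transCLM : M →L[ℝ] M :=
  LinearMap.toContinuousLinearMap (Matrix.transposeLinearEquiv (Fin n) (Fin n) ℝ ℝ).toLinearMap

@[simp] lemma transCLM_apply (A : M) : transCLM A = Aᵀ := by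
  simp [transCLM, Matrix.transposeLinearEquiv]

lemma _root_.HasDerivAt.mtrans {f : ℝ → M} {f' : M} {u : ℝ} (hf : HasDerivAt f f' u) :
    HasDerivAt (fun v => (f v)ᵀ) f'ᵀ u := by
  have := transCLM.hasFDerivAt.comp_hasDerivAt u ((hdaN _ _ _).mpr hf)
  exact this

lemma continuousAt_minv (A : M) (hA : IsUnit A) : ContinuousAt (Inv.inv : M → M) A := by
  apply continuousAt_matrix_inv
  have hdet : A.det ≠ 0 := ((Matrix.isUnit_iff_isUnit_det A).mp hA).ne_zero
  rw [Ring.inverse_eq_inv']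
  exact continuousAt_inv₀ hdet

lemma hasDerivAt_minv {f : ℝ → M} {f' : M} {u : ℝ}
    (hf : HasDerivAt f f' u) (hunit : IsUnit (f u)) :
    HasDerivAt (fun v => (f v)⁻¹) (-((f u)⁻¹ * f' * (f u)⁻¹)) u := by
  have hcont : ContinuousAt f u := hf.continuousAt
  have hdet : (f u).det ≠ 0 := ((Matrix.isUnit_iff_isUnit_det _).mp hunit).ne_zero
  have hdetc : ContinuousAt (fun v => (f v).det) u :=
    (Continuous.matrix_det continuous_id).continuousAt.comp hcont
  have hev : ∀ᶠ v in nhds u, IsUnit (f v) := by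
    filter_upwards [hdetc.eventually_ne hdet] with v hv
    exact (Matrix.isUnit_iff_isUnit_det _).mpr (isUnit_iff_ne_zero.mpr hv)
  have hN : ContinuousAt (fun v => (f v)⁻¹) u :=
    (continuousAt_minv (f u) hunit).comp hcont
  rw [← hdaN, hasDerivAt_iff_tendsto_slope]
  have hslope : Tendsto (slope f u) (nhdsWithin u {u}ᶜ) (nhds f') :=
    hasDerivAt_iff_tendsto_slope.mp ((hdaN _ _ _).mpr hf)
  have heq : ∀ᶠ v in nhdsWithin u {u}ᶜ,
      slope (fun v => (f v)⁻¹) u v = (f v)⁻¹ * (-(slope f u v)) * (f u)⁻¹ := by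
    filter_upwards [eventually_nhdsWithin_of_eventually_nhds hev,
      self_mem_nhdsWithin] with v hv hvne
    have h1 : (f v)⁻¹ - (f u)⁻¹ = (f v)⁻¹ * (f u - f v) * (f u)⁻¹ := by
      have e1 : f u * (f u)⁻¹ = 1 := Matrix.mul_nonsing_inv _
        ((Matrix.isUnit_iff_isUnit_det _).mp hunit)
      have e2 : (f v)⁻¹ * f v = 1 := Matrix.nonsing_inv_mul _
        ((Matrix.isUnit_iff_isUnit_det _).mp hv)
      calc (f v)⁻¹ - (f u)⁻¹ = (f v)⁻¹ * (f u * (f u)⁻¹) - ((f v)⁻¹ * f v) * (f u)⁻¹ := by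
            rw [e1, e2]; simp
        _ = (f v)⁻¹ * (f u - f v) * (f u)⁻¹ := by
            rw [Matrix.mul_sub, Matrix.sub_mul]; noncomm_ring
    simp only [slope_def_module]
    rw [h1]
    have hns : -((v - u)⁻¹ • (f v - f u)) = (v - u)⁻¹ • (f u - f v) := by
      rw [← smul_neg, neg_sub]
    rw [hns]
    simp [Matrix.mul_smul, Matrix.smul_mul]
  rw [tendsto_congr' heq]
  have : Tendsto (fun v => (f v)⁻¹ * (-(slope f u v)) * (f u)⁻¹) (nhdsWithin u {u}ᶜ)
      (nhds ((f u)⁻¹ * (-f') * (f u)⁻¹)) :=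
    ((hN.continuousWithinAt.tendsto.mul hslope.neg).mul tendsto_const_nhds)
  simp only [mul_neg, neg_mul] at this ⊢; exact this

noncomputable def evalCLM (x y : Fin n → ℝ) : M →L[ℝ] ℝ :=
  LinearMap.toContinuousLinearMap
  { toFun := fun A => (A *ᵥ x) ⬝ᵥ y
    map_add' := by
      intro A B; show ((A + B) *ᵥ x) ⬝ᵥ y = _
      rw [Matrix.add_mulVec, add_dotProduct]
    map_smul' := by
      intro c A; show ((c • A) *ᵥ x) ⬝ᵥ y = _
      rw [Matrix.smul_mulVec, smul_dotProduct]; rfl }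

@[simp] lemma evalCLM_apply (x y : Fin n → ℝ) (A : M) :
    evalCLM x y A = (A *ᵥ x) ⬝ᵥ y := by
  simp [evalCLM]

lemma dp_move (A : M) (a b : Fin n → ℝ) : (A *ᵥ a) ⬝ᵥ b = a ⬝ᵥ (Aᵀ *ᵥ b) := by
  rw [dotProduct_comm, Matrix.dotProduct_mulVec, Matrix.mulVec_transpose,
    dotProduct_comm]

lemma dp_cs (a b : Fin n → ℝ) : (a ⬝ᵥ b) ^ 2 ≤ (a ⬝ᵥ a) * (b ⬝ᵥ b) := by
  simpa [dotProduct, sq] using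
    Finset.sum_mul_sq_le_sq_mul_sq Finset.univ a b

lemma dp_self_nonneg (a : Fin n → ℝ) : 0 ≤ a ⬝ᵥ a :=
  Finset.sum_nonneg fun _ _ => mul_self_nonneg _

lemma wronskian_const (R U St : ℝ → M) (hRsym : ∀ u, (R u)ᵀ = R u)
    (hUd : Differentiable ℝ U) (hUd' : Differentiable ℝ (deriv U))
    (hSd : Differentiable ℝ St) (hSd' : Differentiable ℝ (deriv St))
    (hUeq : ∀ u, deriv (deriv U) u + R u * U u = 0)
    (hSeq : ∀ u, deriv (deriv St) u + R u * St u = 0) (u : ℝ) :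
    (deriv U u)ᵀ * St u - (U u)ᵀ * deriv St u
      = (deriv U 0)ᵀ * St 0 - (U 0)ᵀ * deriv St 0 := by
  have hWd : ∀ v, HasDerivAt
      (fun w => (deriv U w)ᵀ * St w - (U w)ᵀ * deriv St w) 0 v := by
    intro v
    have h1 : HasDerivAt (fun w => (deriv U w)ᵀ * St w)
        ((deriv (deriv U) v)ᵀ * St v + (deriv U v)ᵀ * deriv St v) v :=
      ((hUd' v).hasDerivAt.mtrans).matmul (hSd v).hasDerivAt
    have h2 : HasDerivAt (fun w => (U w)ᵀ * deriv St w)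
        ((deriv U v)ᵀ * deriv St v + (U v)ᵀ * deriv (deriv St) v) v :=
      ((hUd v).hasDerivAt.mtrans).matmul (hSd' v).hasDerivAt
    have h3 := h1.sub h2
    have e1 : deriv (deriv U) v = -(R v * U v) := eq_neg_of_add_eq_zero_left (hUeq v)
    have e2 : deriv (deriv St) v = -(R v * St v) := eq_neg_of_add_eq_zero_left (hSeq v)
    have e : (deriv (deriv U) v)ᵀ * St v + (deriv U v)ᵀ * deriv St v
        - ((deriv U v)ᵀ * deriv St v + (U v)ᵀ * deriv (deriv St) v) = 0 := by
      rw [e1, e2, Matrix.transpose_neg, Matrix.transpose_mul, hRsym v]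
      noncomm_ring
    rwa [e] at h3
  have hdiff : Differentiable ℝ (fun w => (deriv U w)ᵀ * St w - (U w)ᵀ * deriv St w) :=
    fun v => (hWd v).differentiableAt
  exact is_const_of_deriv_eq_zero hdiff (fun v => (hWd v).deriv) u 0

end JacobiAux

open JacobiAux

/-- If `‖U(u)x‖ ≥ ‖x‖/α` on `[0, t]`, then
`⟨(U'(0) − S_t'(0))x, x⟩ ≥ ⟨x, x⟩/(α² t)`. -/
theorem lower_bound_deriv_diff {n : ℕ} (hn : 1 ≤ n)
    (R : ℝ → Matrix (Fin n) (Fin n) ℝ) (hRc : Continuous R)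
    (hRsym : ∀ t : ℝ, (R t)ᵀ = R t)
    (α t : ℝ) (hα : 1 ≤ α) (ht : 0 < t)
    (U : ℝ → Matrix (Fin n) (Fin n) ℝ)
    (hU : IsJacobi R U) (hUL : IsLagrangian U) (hU0 : U 0 = 1)
    (hUinv : ∀ u ∈ Set.Icc (0 : ℝ) t, IsUnit (U u))
    (hUlow : ∀ u ∈ Set.Icc (0 : ℝ) t, ∀ x : Fin n → ℝ,
      euclNorm x / α ≤ euclNorm (U u *ᵥ x))
    (St : ℝ → Matrix (Fin n) (Fin n) ℝ)
    (hSt : IsJacobi R St) (hSt0 : St 0 = 1) (hStt : St t = 0) :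
    ∀ x : Fin n → ℝ,
      (x ⬝ᵥ x) / (α ^ 2 * t) ≤ ((deriv U 0 - deriv St 0) *ᵥ x) ⬝ᵥ x := by
  intro x
  obtain ⟨hUc, hUeq⟩ := hU
  obtain ⟨hSc, hSeq⟩ := hSt
  have hα0 : (0 : ℝ) < α := lt_of_lt_of_le one_pos hα
  -- differentiability
  have hUd2 : Differentiable ℝ U ∧ Differentiable ℝ (deriv U) := by
    have h2 : ContDiff ℝ ((1 : ℕ) + 1) U := by exact_mod_cast hUc
    have := (contDiff_succ_iff_deriv).mp h2
    exact ⟨this.1, this.2.2.differentiable (by simp)⟩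
  have hSd2 : Differentiable ℝ St ∧ Differentiable ℝ (deriv St) := by
    have h2 : ContDiff ℝ ((1 : ℕ) + 1) St := by exact_mod_cast hSc
    have := (contDiff_succ_iff_deriv).mp h2
    exact ⟨this.1, this.2.2.differentiable (by simp)⟩
  obtain ⟨hUd, hUd'⟩ := hUd2
  obtain ⟨hSd, hSd'⟩ := hSd2
  set D : Matrix (Fin n) (Fin n) ℝ := deriv U 0 - deriv St 0 with hDdef
  -- derivative of U at 0 is symmetric
  have hDsym0 : (deriv U 0)ᵀ = deriv U 0 := by
    have := hUL 0
    rwa [hU0, mul_one, Matrix.transpose_one, one_mul] at this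
  -- Wronskian is constant = D
  have hW : ∀ u, (deriv U u)ᵀ * St u - (U u)ᵀ * deriv St u = D := by
    intro u
    rw [wronskian_const R U St hRsym hUd hUd' hSd hSd' hUeq hSeq u]
    rw [hU0, hSt0, mul_one, Matrix.transpose_one, one_mul, hDsym0]
  set N : ℝ → Matrix (Fin n) (Fin n) ℝ := fun v => (U v)⁻¹ with hNdef
  have hNcontAt : ∀ u ∈ Set.Icc (0:ℝ) t, ContinuousAt N u := fun u hu =>
    (continuousAt_minv (U u) (hUinv u hu)).comp (hUd u).continuousAt
  have hNcont : ContinuousOn N (Set.Icc (0:ℝ) t) := fun u hu =>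
    (hNcontAt u hu).continuousWithinAt
  -- derivative of V = N * St
  have hUdet : ∀ u ∈ Set.Icc (0:ℝ) t, IsUnit (U u).det := fun u hu =>
    (Matrix.isUnit_iff_isUnit_det _).mp (hUinv u hu)
  have hVd : ∀ u ∈ Set.Icc (0:ℝ) t,
      HasDerivAt (fun v => N v * St v) (-(N u * (N u)ᵀ * D)) u := by
    intro u hu
    have hNu : HasDerivAt N (-(N u * deriv U u * N u)) u :=
      hasDerivAt_minv (hUd u).hasDerivAt (hUinv u hu)
    have hV := hNu.matmul (hSd u).hasDerivAt
    have hUN : U u * N u = 1 := Matrix.mul_nonsing_inv _ (hUdet u hu)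
    have hNU : N u * U u = 1 := Matrix.nonsing_inv_mul _ (hUdet u hu)
    have hLag : (N u)ᵀ * (deriv U u)ᵀ = deriv U u * N u := by
      have h1 : (N u)ᵀ * ((deriv U u)ᵀ * U u) * N u
          = (N u)ᵀ * ((U u)ᵀ * deriv U u) * N u := by rw [hUL u]
      have hUNT : (N u)ᵀ * (U u)ᵀ = 1 := by
        rw [← Matrix.transpose_mul, hUN, Matrix.transpose_one]
      calc (N u)ᵀ * (deriv U u)ᵀ = (N u)ᵀ * (deriv U u)ᵀ * (U u * N u) := by
            rw [hUN, mul_one]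
        _ = (N u)ᵀ * ((deriv U u)ᵀ * U u) * N u := by noncomm_ring
        _ = (N u)ᵀ * ((U u)ᵀ * deriv U u) * N u := h1
        _ = ((N u)ᵀ * (U u)ᵀ) * (deriv U u * N u) := by noncomm_ring
        _ = deriv U u * N u := by rw [hUNT, one_mul]
    have hval : -(N u * deriv U u * N u) * St u + N u * deriv St u
        = -(N u * (N u)ᵀ * D) := by
      rw [← hW u]
      have hUNT : (N u)ᵀ * (U u)ᵀ = 1 := by
        rw [← Matrix.transpose_mul, hUN, Matrix.transpose_one]
      calc -(N u * deriv U u * N u) * St u + N u * deriv St u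
          = -(N u * ((deriv U u * N u) * St u)) + N u * deriv St u := by noncomm_ring
        _ = -(N u * (((N u)ᵀ * (deriv U u)ᵀ) * St u)) + N u * deriv St u := by rw [hLag]
        _ = -(N u * (N u)ᵀ * ((deriv U u)ᵀ * St u - (U u)ᵀ * deriv St u)) := by
            rw [Matrix.mul_sub]
            rw [show N u * (N u)ᵀ * ((U u)ᵀ * deriv St u)
                = N u * (((N u)ᵀ * (U u)ᵀ) * deriv St u) by noncomm_ring,
              hUNT, one_mul]
            noncomm_ring
    exact hV.congr_deriv hval
  -- FTC master identity
  have master : ∀ y : Fin n → ℝ,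
      (∫ u in (0:ℝ)..t, ((N u)ᵀ *ᵥ (D *ᵥ x)) ⬝ᵥ ((N u)ᵀ *ᵥ y)) = x ⬝ᵥ y := by
    intro y
    set φ : ℝ → ℝ := fun u => ((N u * St u) *ᵥ x) ⬝ᵥ y with hφdef
    set g0 : ℝ → ℝ := fun u => -(((N u * (N u)ᵀ * D) *ᵥ x) ⬝ᵥ y) with hg0def
    have hφd : ∀ u ∈ Set.uIcc (0:ℝ) t, HasDerivAt φ (g0 u) u := by
      intro u hu
      rw [Set.uIcc_of_le ht.le] at hu
      have h := (evalCLM x y).hasFDerivAt.comp_hasDerivAt u ((hdaN _ _ _).mpr (hVd u hu))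
      have h' : HasDerivAt φ ((evalCLM x y) (-(N u * (N u)ᵀ * D))) u := h
      have e : (evalCLM x y) (-(N u * (N u)ᵀ * D)) = g0 u := by
        simp [g0, Matrix.neg_mulVec, neg_dotProduct]
      exact h'.congr_deriv e
    have hg0cont : ContinuousOn g0 (Set.uIcc (0:ℝ) t) := by
      rw [Set.uIcc_of_le ht.le]
      have h1 : Continuous fun A : Matrix (Fin n) (Fin n) ℝ => A * Aᵀ * D :=
        (continuous_id.matrix_mul continuous_id.matrix_transpose).matrix_mul
          continuous_const
      have hF : Continuous fun A : Matrix (Fin n) (Fin n) ℝ =>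
          -(((A * Aᵀ * D) *ᵥ x) ⬝ᵥ y) := by
        refine Continuous.neg ?_
        simpa [Function.comp_def] using (evalCLM x y).continuous.comp h1
      exact hF.comp_continuousOn hNcont
    have hint : IntervalIntegrable g0 volume 0 t := hg0cont.intervalIntegrable
    have hFTC := intervalIntegral.integral_eq_sub_of_hasDerivAt hφd hint
    have hφt : φ t = 0 := by simp [φ, hStt]
    have hφ0 : φ 0 = x ⬝ᵥ y := by
      simp [φ, N, hU0, hSt0]
    rw [hφt, hφ0] at hFTC
    have h2 : (∫ u in (0:ℝ)..t, ((N u * (N u)ᵀ * D) *ᵥ x) ⬝ᵥ y) = x ⬝ᵥ y := by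
      have hneg : (∫ u in (0:ℝ)..t, g0 u)
          = -∫ u in (0:ℝ)..t, ((N u * (N u)ᵀ * D) *ᵥ x) ⬝ᵥ y := by
        rw [hg0def]
        exact intervalIntegral.integral_neg
      rw [hneg] at hFTC
      linarith [hFTC]
    rw [← h2]
    apply intervalIntegral.integral_congr
    intro u _
    show ((N u)ᵀ *ᵥ (D *ᵥ x)) ⬝ᵥ ((N u)ᵀ *ᵥ y) = ((N u * (N u)ᵀ * D) *ᵥ x) ⬝ᵥ y
    rw [Matrix.mul_assoc, ← Matrix.mulVec_mulVec, ← Matrix.mulVec_mulVec,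
      dp_move (N u) ((N u)ᵀ *ᵥ (D *ᵥ x)) y]
  -- abbreviations
  set p : ℝ → (Fin n → ℝ) := fun u => (N u)ᵀ *ᵥ (D *ᵥ x) with hpdef
  set q : ℝ → (Fin n → ℝ) := fun u => (N u)ᵀ *ᵥ x with hqdef
  have I1 : (∫ u in (0:ℝ)..t, p u ⬝ᵥ q u) = x ⬝ᵥ x := master x
  have I2 : (∫ u in (0:ℝ)..t, p u ⬝ᵥ p u) = x ⬝ᵥ (D *ᵥ x) := master (D *ᵥ x)
  set c : ℝ := α ^ 2 * t with hcdef
  have hcpos : 0 < c := by positivity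
  -- continuity helper
  have hGen : ∀ v w : Fin n → ℝ,
      ContinuousOn (fun u => ((N u)ᵀ *ᵥ v) ⬝ᵥ ((N u)ᵀ *ᵥ w)) (Set.Icc (0:ℝ) t) := by
    intro v w
    have hF : Continuous fun A : Matrix (Fin n) (Fin n) ℝ =>
        (Aᵀ *ᵥ v) ⬝ᵥ (Aᵀ *ᵥ w) :=
      (continuous_id.matrix_transpose.matrix_mulVec continuous_const).dotProduct
        (continuous_id.matrix_transpose.matrix_mulVec continuous_const)
    exact hF.comp_continuousOn hNcont
  have int_pq : IntervalIntegrable (fun u => p u ⬝ᵥ q u) volume 0 t := by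
    apply ContinuousOn.intervalIntegrable
    rw [Set.uIcc_of_le ht.le]; exact hGen _ _
  have int_pp : IntervalIntegrable (fun u => p u ⬝ᵥ p u) volume 0 t := by
    apply ContinuousOn.intervalIntegrable
    rw [Set.uIcc_of_le ht.le]; exact hGen _ _
  have int_qq : IntervalIntegrable (fun u => q u ⬝ᵥ q u) volume 0 t := by
    apply ContinuousOn.intervalIntegrable
    rw [Set.uIcc_of_le ht.le]; exact hGen _ _
  -- pointwise bound on q
  have hqb : ∀ u ∈ Set.Icc (0:ℝ) t, q u ⬝ᵥ q u ≤ α ^ 2 * (x ⬝ᵥ x) := by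
    intro u hu
    have hUN : U u * N u = 1 := Matrix.mul_nonsing_inv _ (hUdet u hu)
    have hNz : ∀ z : Fin n → ℝ, (N u *ᵥ z) ⬝ᵥ (N u *ᵥ z) ≤ α ^ 2 * (z ⬝ᵥ z) := by
      intro z
      have h := hUlow u hu (N u *ᵥ z)
      rw [Matrix.mulVec_mulVec, hUN, Matrix.one_mulVec] at h
      rw [div_le_iff₀ hα0] at h
      have e2 := Real.sq_sqrt (dp_self_nonneg (N u *ᵥ z))
      have e3 := Real.sq_sqrt (dp_self_nonneg z)
      have e4 : (0:ℝ) ≤ Real.sqrt ((N u *ᵥ z) ⬝ᵥ (N u *ᵥ z)) := Real.sqrt_nonneg _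
      have e5 : (0:ℝ) ≤ Real.sqrt (z ⬝ᵥ z) := Real.sqrt_nonneg _
      simp only [euclNorm] at h
      nlinarith [h, e2, e3, e4, e5]
    have e0 : q u ⬝ᵥ q u = x ⬝ᵥ (N u *ᵥ q u) := by
      rw [hqdef]
      simp only []
      rw [dp_move ((U u)⁻¹)ᵀ x (q u), Matrix.transpose_transpose]
    have hcs := dp_cs x (N u *ᵥ q u)
    have hb := hNz (q u)
    have hxx := dp_self_nonneg x
    have hqq := dp_self_nonneg (q u)
    rcases eq_or_lt_of_le hqq with h0 | h0
    · rw [← h0]; positivity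
    · nlinarith [hcs, hb, hxx, h0, e0]
  -- pointwise AM-GM
  have hpq : ∀ u ∈ Set.Icc (0:ℝ) t,
      p u ⬝ᵥ q u ≤ (c/2) * (p u ⬝ᵥ p u) + (1/(2*c)) * (q u ⬝ᵥ q u) := by
    intro u _
    have key : ∀ a b : ℝ, a * b ≤ c/2 * a^2 + 1/(2*c) * b^2 := by
      intro a b
      rw [← sub_nonneg]
      have : c/2 * a^2 + 1/(2*c) * b^2 - a*b = (c*a - b)^2 / (2*c) := by
        field_simp; ring
      rw [this]; positivity
    simp only [dotProduct]
    rw [Finset.mul_sum, Finset.mul_sum, ← Finset.sum_add_distrib]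
    refine Finset.sum_le_sum fun i _ => ?_
    have := key (p u i) (q u i)
    nlinarith [this]
  -- integrate
  have step1 : (∫ u in (0:ℝ)..t, p u ⬝ᵥ q u)
      ≤ ∫ u in (0:ℝ)..t, ((c/2) * (p u ⬝ᵥ p u) + (1/(2*c)) * (q u ⬝ᵥ q u)) :=
    intervalIntegral.integral_mono_on ht.le int_pq
      ((int_pp.const_mul _).add (int_qq.const_mul _)) hpq
  have step2 : (∫ u in (0:ℝ)..t, ((c/2) * (p u ⬝ᵥ p u) + (1/(2*c)) * (q u ⬝ᵥ q u)))
      = (c/2) * (x ⬝ᵥ (D *ᵥ x)) + (1/(2*c)) * ∫ u in (0:ℝ)..t, q u ⬝ᵥ q u := by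
    rw [intervalIntegral.integral_add (int_pp.const_mul _) (int_qq.const_mul _),
      intervalIntegral.integral_const_mul, intervalIntegral.integral_const_mul, I2]
  have step3 : (∫ u in (0:ℝ)..t, q u ⬝ᵥ q u) ≤ c * (x ⬝ᵥ x) := by
    have h := intervalIntegral.integral_mono_on ht.le int_qq
      (intervalIntegrable_const (c := α ^ 2 * (x ⬝ᵥ x))) hqb
    simp only [intervalIntegral.integral_const, smul_eq_mul, sub_zero] at h
    calc (∫ u in (0:ℝ)..t, q u ⬝ᵥ q u) ≤ t * (α ^ 2 * (x ⬝ᵥ x)) := h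
      _ = c * (x ⬝ᵥ x) := by rw [hcdef]; ring
  have hxx : x ⬝ᵥ x ≤ (c/2) * (x ⬝ᵥ (D *ᵥ x)) + (1/(2*c)) * (c * (x ⬝ᵥ x)) := by
    have h4 : (1/(2*c)) * (∫ u in (0:ℝ)..t, q u ⬝ᵥ q u)
        ≤ (1/(2*c)) * (c * (x ⬝ᵥ x)) := by
      apply mul_le_mul_of_nonneg_left step3
      positivity
    calc x ⬝ᵥ x = ∫ u in (0:ℝ)..t, p u ⬝ᵥ q u := I1.symm
      _ ≤ (c/2) * (x ⬝ᵥ (D *ᵥ x)) + (1/(2*c)) * ∫ u in (0:ℝ)..t, q u ⬝ᵥ q u := by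
          rw [← step2]; exact step1
      _ ≤ _ := by linarith [h4]
  have h5 : (1/(2*c)) * (c * (x ⬝ᵥ x)) = (x ⬝ᵥ x) / 2 := by
    field_simp
  rw [h5] at hxx
  have h6 : x ⬝ᵥ x ≤ c * (x ⬝ᵥ (D *ᵥ x)) := by linarith
  rw [dotProduct_comm (D *ᵥ x) x, div_le_iff₀ hcpos,
    mul_comm (x ⬝ᵥ (D *ᵥ x)) c]
  exact h6
end

section
/- Let n ≥ 1, let R : ℝ → Matrix (Fin n) (Fin n) ℝ be continuous with R(t) symmetric for every t, and let T > 0. Let U be a Lagrangian Jacobi solution along R with U(0) = 1 such that U(u) is invertible for every u ∈ [0, T], let A be the Jacobi solution along R with A(0) = 0 and A'(0) = 1, and for t ∈ (0, T] let S_t be the Jacobi solution along R with S_t(0) = 1 and S_t(t) = 0. Then for every t ∈ (0, T], det A(t) * det (U'(0) − S_t'(0)) = det U(t). -/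
open Matrix MeasureTheory

attribute [local instance] Matrix.normedAddCommGroup Matrix.normedSpace

section helpers

variable {n : ℕ}

local notation "M" => Matrix (Fin n) (Fin n) ℝ

noncomputable def mulCLM (n : ℕ) :
    Matrix (Fin n) (Fin n) ℝ →L[ℝ] Matrix (Fin n) (Fin n) ℝ →L[ℝ] Matrix (Fin n) (Fin n) ℝ :=
  LinearMap.toContinuousLinearMap
    ((LinearMap.toContinuousLinearMap.toLinearMap).comp
      (LinearMap.mul ℝ (Matrix (Fin n) (Fin n) ℝ)))

@[simp] lemma mulCLM_apply (X Y : M) : mulCLM n X Y = X * Y := rfl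

noncomputable def transCLM (n : ℕ) :
    Matrix (Fin n) (Fin n) ℝ →L[ℝ] Matrix (Fin n) (Fin n) ℝ :=
  LinearMap.toContinuousLinearMap (Matrix.transposeLinearEquiv (Fin n) (Fin n) ℝ ℝ).toLinearMap

@[simp] lemma transCLM_apply (X : M) : transCLM n X = Xᵀ := rfl

lemma HasDerivAt.matmul_s17 {X Y : ℝ → M} {X' Y' : M} {t : ℝ}
    (hX : HasDerivAt X X' t) (hY : HasDerivAt Y Y' t) :
    HasDerivAt (fun s => X s * Y s) (X' * Y t + X t * Y') t := by
  have h := (mulCLM n).hasDerivAt_of_bilinear (fun _ => hX) (fun _ => hY)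
  rw [add_comm]; exact h

lemma HasDerivAt.mattrans {X : ℝ → M} {X' : M} {t : ℝ} (hX : HasDerivAt X X' t) :
    HasDerivAt (fun s => (X s)ᵀ) X'ᵀ t := by
  exact (transCLM n).hasFDerivAt.comp_hasDerivAt t hX

lemma IsJacobi.diff {R X : ℝ → M} (hX : IsJacobi R X) : Differentiable ℝ X :=
  hX.1.differentiable (by norm_num)

lemma IsJacobi.diff_deriv {R X : ℝ → M} (hX : IsJacobi R X) : Differentiable ℝ (deriv X) := by
  have h : ContDiff ℝ ((1 : ℕ) + 1) X := by exact_mod_cast hX.1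
  exact (contDiff_succ_iff_deriv.mp h).2.2.differentiable (by norm_num)

lemma IsJacobi.deriv2_s17 {R X : ℝ → M} (hX : IsJacobi R X) (t : ℝ) :
    deriv (deriv X) t = -(R t * X t) :=
  eq_neg_of_add_eq_zero_left (hX.2 t)

/-- The Wronskian of two Jacobi solutions is constant. -/
lemma wronskian_const {R X Y : ℝ → M} (hRsym : ∀ t : ℝ, (R t)ᵀ = R t)
    (hX : IsJacobi R X) (hY : IsJacobi R Y) (s : ℝ) :
    (deriv X s)ᵀ * Y s - (X s)ᵀ * deriv Y s
      = (deriv X 0)ᵀ * Y 0 - (X 0)ᵀ * deriv Y 0 := by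
  set W : ℝ → M := fun s => (deriv X s)ᵀ * Y s - (X s)ᵀ * deriv Y s with hW
  have key : ∀ u : ℝ, HasDerivAt W 0 u := by
    intro u
    have hXd : HasDerivAt X (deriv X u) u := (hX.diff u).hasDerivAt
    have hYd : HasDerivAt Y (deriv Y u) u := (hY.diff u).hasDerivAt
    have hXdd : HasDerivAt (deriv X) (-(R u * X u)) u := by
      have h := (hX.diff_deriv u).hasDerivAt
      rw [← hX.deriv2_s17 u]; exact h
    have hYdd : HasDerivAt (deriv Y) (-(R u * Y u)) u := by
      have h := (hY.diff_deriv u).hasDerivAt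
      rw [← hY.deriv2_s17 u]; exact h
    have h1 : HasDerivAt (fun s => (deriv X s)ᵀ * Y s)
        ((-(R u * X u))ᵀ * Y u + (deriv X u)ᵀ * deriv Y u) u :=
      (hXdd.mattrans).matmul_s17 hYd
    have h2 : HasDerivAt (fun s => (X s)ᵀ * deriv Y s)
        ((deriv X u)ᵀ * deriv Y u + (X u)ᵀ * (-(R u * Y u))) u :=
      (hXd.mattrans).matmul_s17 hYdd
    have h := h1.sub h2
    have hzero : (-(R u * X u))ᵀ * Y u + (deriv X u)ᵀ * deriv Y u
        - ((deriv X u)ᵀ * deriv Y u + (X u)ᵀ * (-(R u * Y u))) = 0 := by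
      have ht : (-(R u * X u))ᵀ = -((X u)ᵀ * R u) := by
        rw [Matrix.transpose_neg, Matrix.transpose_mul, hRsym]
      rw [ht]
      simp [Matrix.mul_assoc, mul_neg, neg_mul]
      abel
    rwa [hzero] at h
  have hdiff : Differentiable ℝ W := fun u => (key u).differentiableAt
  have hd0 : ∀ u, deriv W u = 0 := fun u => (key u).deriv
  have := is_const_of_deriv_eq_zero hdiff hd0 s 0
  simpa [hW] using this

end helpers

/-- `det A(t) · det (U'(0) − S_t'(0)) = det U(t)` for `t ∈ (0, T]`, where
`A(0) = 0`, `A'(0) = 1`, `U` is a nonsingular Lagrangian Jacobi solution with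
`U(0) = 1`, and `S_t(0) = 1`, `S_t(t) = 0`. -/
theorem det_A_mul_det_deriv_diff_eq_det_U {n : ℕ} (hn : 1 ≤ n)
    (R : ℝ → Matrix (Fin n) (Fin n) ℝ) (hRc : Continuous R)
    (hRsym : ∀ t : ℝ, (R t)ᵀ = R t)
    (T : ℝ) (hT : 0 < T)
    (U : ℝ → Matrix (Fin n) (Fin n) ℝ)
    (hU : IsJacobi R U) (hUL : IsLagrangian U) (hU0 : U 0 = 1)
    (hUinv : ∀ u ∈ Set.Icc (0 : ℝ) T, IsUnit (U u))
    (A : ℝ → Matrix (Fin n) (Fin n) ℝ)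
    (hA : IsJacobi R A) (hA0 : A 0 = 0) (hA'0 : deriv A 0 = 1) :
    ∀ t ∈ Set.Ioc (0 : ℝ) T, ∀ St : ℝ → Matrix (Fin n) (Fin n) ℝ,
      IsJacobi R St → St 0 = 1 → St t = 0 →
        (A t).det * (deriv U 0 - deriv St 0).det = (U t).det := by
  intro t ht St hSt hSt0 hStt
  -- U'(0) is symmetric
  have hsym : (deriv U 0)ᵀ = deriv U 0 := by
    have h := hUL 0
    rw [hU0] at h
    simpa using h
  -- Wronskian of A and St: A(t)ᵀ S'(t) = -1
  have hAS : (A t)ᵀ * deriv St t = -1 := by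
    have h := wronskian_const hRsym hA hSt t
    rw [hA0, hA'0, hStt, hSt0] at h
    simp only [Matrix.mul_zero, Matrix.transpose_one, Matrix.one_mul, Matrix.transpose_zero,
      Matrix.zero_mul, sub_zero, zero_sub] at h
    rw [neg_eq_iff_eq_neg] at h
    exact h
  -- Wronskian of St and U: S'(t)ᵀ U(t) = S'(0)ᵀ − U'(0)
  have hSU : (deriv St t)ᵀ * U t = (deriv St 0)ᵀ - deriv U 0 := by
    have h := wronskian_const hRsym hSt hU t
    rw [hStt, hSt0, hU0] at h
    simpa using h
  -- determinant bookkeeping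
  have e1 : (deriv U 0 - deriv St 0).det = (-1 : ℝ) ^ n * ((deriv St t).det * (U t).det) := by
    have : (deriv U 0 - deriv St 0)ᵀ = -((deriv St t)ᵀ * U t) := by
      rw [hSU, Matrix.transpose_sub, hsym, neg_sub]
    calc (deriv U 0 - deriv St 0).det = ((deriv U 0 - deriv St 0)ᵀ).det := (det_transpose _).symm
      _ = (-((deriv St t)ᵀ * U t)).det := by rw [this]
      _ = (-1 : ℝ) ^ n * ((deriv St t).det * (U t).det) := by
          rw [Matrix.det_neg, Matrix.det_mul, Matrix.det_transpose]
          simp [Fintype.card_fin]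
  have e2 : (A t).det * (deriv St t).det = (-1 : ℝ) ^ n := by
    have h := congrArg Matrix.det hAS
    rw [Matrix.det_mul, Matrix.det_transpose] at h
    simpa [Matrix.det_neg, Fintype.card_fin] using h
  rw [e1]
  calc (A t).det * ((-1 : ℝ) ^ n * ((deriv St t).det * (U t).det))
      = ((-1 : ℝ) ^ n * ((A t).det * (deriv St t).det)) * (U t).det := by ring
    _ = (U t).det := by rw [e2, ← mul_pow]; norm_num
end
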